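/- Let k be a field, M_0, ..., M_m symmetric (n+1)×(n+1) matrices over k, and M(X) = X_0 M_0 + ... + X_m M_m. Define F_Q := { P ∈ GL_{n+1}(k) : ∃ u ∈ k^×, ᵗP M(X) P = u·M(X) } and let L_0 be the algebra of pairs (P, P') with ᵗP M(X) = M(X) P', with anti-involution σ(P,P') = (P',P). Then the map P ↦ (P, u P^{-1}) (where u is the associated scalar) defines a group isomorphism from F_Q onto { l ∈ L_0^× : σ(l)·l ∈ k^×·(I,I) }. -/

import Mathlib

open Matrix MvPolynomial

/-- The symmetric matrix of linear forms `M(X) = X_0 M_0 + ... + X_m M_m`. -/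
noncomputable def MX {k : Type*} [Field k] (m n : ℕ)
    (M : Fin (m + 1) → Matrix (Fin (n + 1)) (Fin (n + 1)) k) :
    Matrix (Fin (n + 1)) (Fin (n + 1)) (MvPolynomial (Fin (m + 1)) k) :=
  ∑ i, (X i : MvPolynomial (Fin (m + 1)) k) •
    (M i).map (fun a => (C a : MvPolynomial (Fin (m + 1)) k))

/-- Mapping a matrix over `k` to a matrix over `k[X_0, ..., X_m]`. -/
noncomputable def polyMat {k : Type*} [Field k] (m n : ℕ)
    (N : Matrix (Fin (n + 1)) (Fin (n + 1)) k) :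
    Matrix (Fin (n + 1)) (Fin (n + 1)) (MvPolynomial (Fin (m + 1)) k) :=
  N.map (fun a => (C a : MvPolynomial (Fin (m + 1)) k))

/-- Pairs of square matrices of size `n+1`. -/
abbrev MatPair (k : Type*) [Field k] (n : ℕ) :=
  Matrix (Fin (n + 1)) (Fin (n + 1)) k × Matrix (Fin (n + 1)) (Fin (n + 1)) k

/-- The multiplication `(P₁,P'₁) ∘ (P₂,P'₂) = (P₂P₁, P'₁P'₂)` on `L₀`. -/
def lmul {k : Type*} [Field k] (n : ℕ) (p q : MatPair k n) : MatPair k n :=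
  (q.1 * p.1, p.2 * q.2)

lemma pm_eq {k : Type*} [Field k] (m n : ℕ)
    (N : Matrix (Fin (n + 1)) (Fin (n + 1)) k) :
    polyMat m n N = (C : k →+* MvPolynomial (Fin (m + 1)) k).mapMatrix N := rfl

lemma pm_mul {k : Type*} [Field k] (m n : ℕ)
    (A B : Matrix (Fin (n + 1)) (Fin (n + 1)) k) :
    polyMat m n (A * B) = polyMat m n A * polyMat m n B := by
  simp [pm_eq]

lemma pm_one {k : Type*} [Field k] (m n : ℕ) :
    polyMat m n (1 : Matrix (Fin (n + 1)) (Fin (n + 1)) k) = 1 := by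
  rw [pm_eq]; exact map_one _

lemma pm_smul {k : Type*} [Field k] (m n : ℕ) (c : k)
    (A : Matrix (Fin (n + 1)) (Fin (n + 1)) k) :
    polyMat m n (c • A) = (C c : MvPolynomial (Fin (m + 1)) k) • polyMat m n A := by
  ext i j
  simp [polyMat, Matrix.smul_apply, smul_eq_mul, smul_eq_C_mul]

theorem stmt14 {k : Type*} [Field k] (m n : ℕ)
    (M : Fin (m + 1) → Matrix (Fin (n + 1)) (Fin (n + 1)) k)
    (hsym : ∀ i, (M i).IsSymm) :
    -- P ↦ (P, u P⁻¹) lands in { l ∈ L₀ˣ : σ(l)·l ∈ k^×·(I,I) }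
    (∀ (P : Matrix (Fin (n + 1)) (Fin (n + 1)) k) (u : kˣ), IsUnit P.det →
      (polyMat m n P)ᵀ * MX m n M * polyMat m n P = (C (u : k) : MvPolynomial (Fin (m + 1)) k) • MX m n M →
      ((polyMat m n P)ᵀ * MX m n M = MX m n M * polyMat m n ((u : k) • P⁻¹)
        ∧ P * ((u : k) • P⁻¹) = (u : k) • (1 : Matrix (Fin (n + 1)) (Fin (n + 1)) k)
        ∧ ((u : k) • P⁻¹) * P = (u : k) • (1 : Matrix (Fin (n + 1)) (Fin (n + 1)) k)))
    -- the map is surjective onto that set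
    ∧ (∀ l : MatPair k n,
        (polyMat m n l.1)ᵀ * MX m n M = MX m n M * polyMat m n l.2 →
        (∃ w : kˣ, l.1 * l.2 = (w : k) • (1 : Matrix (Fin (n + 1)) (Fin (n + 1)) k)) →
        ∃ (P : Matrix (Fin (n + 1)) (Fin (n + 1)) k) (u : kˣ), IsUnit P.det ∧
          (polyMat m n P)ᵀ * MX m n M * polyMat m n P = (C (u : k) : MvPolynomial (Fin (m + 1)) k) • MX m n M ∧
          l = (P, (u : k) • P⁻¹))
    -- the map is injective
    ∧ (∀ (P Q : Matrix (Fin (n + 1)) (Fin (n + 1)) k) (u v : kˣ),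
        IsUnit P.det → IsUnit Q.det →
        (polyMat m n P)ᵀ * MX m n M * polyMat m n P = (C (u : k) : MvPolynomial (Fin (m + 1)) k) • MX m n M →
        (polyMat m n Q)ᵀ * MX m n M * polyMat m n Q = (C (v : k) : MvPolynomial (Fin (m + 1)) k) • MX m n M →
        ((P, (u : k) • P⁻¹) : MatPair k n) = (Q, (v : k) • Q⁻¹) → P = Q)
    -- the map is compatible with the group laws
    ∧ (∀ (P Q : Matrix (Fin (n + 1)) (Fin (n + 1)) k) (u v : kˣ),
        IsUnit P.det → IsUnit Q.det →
        (polyMat m n P)ᵀ * MX m n M * polyMat m n P = (C (u : k) : MvPolynomial (Fin (m + 1)) k) • MX m n M →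
        (polyMat m n Q)ᵀ * MX m n M * polyMat m n Q = (C (v : k) : MvPolynomial (Fin (m + 1)) k) • MX m n M →
        ((Q * P, ((u * v : kˣ) : k) • (Q * P)⁻¹) : MatPair k n)
          = lmul n (P, (u : k) • P⁻¹) (Q, (v : k) • Q⁻¹)) := by
  refine ⟨?_, ?_, ?_, ?_⟩
  · intro P u hP hPM
    have hPP : P * P⁻¹ = 1 := Matrix.mul_nonsing_inv P hP
    have hPP' : P⁻¹ * P = 1 := Matrix.nonsing_inv_mul P hP
    refine ⟨?_, ?_, ?_⟩
    · have h1 : polyMat m n P * polyMat m n P⁻¹ = 1 := by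
        rw [← pm_mul, hPP, pm_one]
      calc (polyMat m n P)ᵀ * MX m n M
          = (polyMat m n P)ᵀ * MX m n M * polyMat m n P * polyMat m n P⁻¹ := by
            rw [Matrix.mul_assoc, h1, Matrix.mul_one]
        _ = ((C (u : k) : MvPolynomial (Fin (m + 1)) k) • MX m n M) * polyMat m n P⁻¹ := by
            rw [hPM]
        _ = MX m n M * polyMat m n ((u : k) • P⁻¹) := by
            rw [pm_smul, Matrix.smul_mul, Matrix.mul_smul]
    · rw [Matrix.mul_smul, hPP]
    · rw [Matrix.smul_mul, hPP']
  · rintro ⟨A, B⟩ hAB ⟨w, hw⟩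
    simp only at hAB hw ⊢
    have hdet : IsUnit A.det := by
      have : A.det * B.det = ((w : k) ^ (n + 1)) := by
        rw [← Matrix.det_mul, hw]
        simp [Matrix.det_smul, Fintype.card_fin]
      exact isUnit_of_mul_isUnit_left (this ▸ (w.isUnit.pow (n + 1)))
    have hAA : A⁻¹ * A = 1 := Matrix.nonsing_inv_mul A hdet
    have hB : B = (w : k) • A⁻¹ := by
      calc B = (A⁻¹ * A) * B := by rw [hAA, Matrix.one_mul]
        _ = A⁻¹ * ((w : k) • (1 : Matrix (Fin (n+1)) (Fin (n+1)) k)) := by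
            rw [Matrix.mul_assoc, hw]
        _ = (w : k) • A⁻¹ := by rw [Matrix.mul_smul, Matrix.mul_one]
    refine ⟨A, w, hdet, ?_, by rw [hB]⟩
    have hBA : B * A = (w : k) • 1 := by
      rw [hB, Matrix.smul_mul, hAA]
    calc (polyMat m n A)ᵀ * MX m n M * polyMat m n A
        = MX m n M * (polyMat m n B * polyMat m n A) := by
          rw [hAB, Matrix.mul_assoc]
      _ = MX m n M * polyMat m n ((w : k) • 1) := by rw [← pm_mul, hBA]
      _ = (C (w : k) : MvPolynomial (Fin (m + 1)) k) • MX m n M := by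
          rw [pm_smul, pm_one, Matrix.mul_smul, Matrix.mul_one]
  · intro P Q u v _ _ _ _ h
    exact (Prod.mk.injEq _ _ _ _ ▸ h).1
  · intro P Q u v hP hQ _ _
    simp only [lmul, Prod.mk.injEq]
    refine ⟨trivial, ?_⟩
    rw [Matrix.mul_inv_rev]
    rw [Matrix.smul_mul, Matrix.mul_smul, smul_smul]
    push_cast
    ring_nf
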